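/- Assume the minus-infinity-order Rényi entropy rate ℋ₋∞ exists with 0 < ℋ₋∞ < ∞, and that β·ℋ₋∞ > 1. For n large enough define the minimal detectable overlap t_MDO(n) := max{ t ∈ {1,…,ℓ(n)} : max_{x∈𝒳^t : P_{X₁^t}(x)>0} log(1/P_{X₁^t}(x)) ≤ log n_ℓ } (the set is nonempty for all sufficiently large n). Then t_MDO(n) → ∞ and t_MDO(n)/log n → 1/ℋ₋∞ as n → ∞. -/

import Mathlib

open MeasureTheory Filter Real

section

variable {𝒳 : Type*} [Fintype 𝒳] [MeasurableSpace 𝒳] [MeasurableSingletonClass 𝒳]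

/-- The left shift on two-sided sequences. -/
def shift {𝒳 : Type*} : (ℤ → 𝒳) → (ℤ → 𝒳) := fun ω i => ω (i + 1)

/-- The pmf of the block `(X_a, …, X_{a+t-1})` under `μ`. -/
noncomputable def blockPmf (μ : Measure (ℤ → 𝒳)) (a : ℤ) (t : ℕ) (x : Fin t → 𝒳) : ℝ :=
  (μ {ω | ∀ i : Fin t, ω (a + ((i : ℕ) : ℤ)) = x i}).toReal

/-- Shannon entropy of the block `(X_1, …, X_t)`. -/
noncomputable def shannonH (μ : Measure (ℤ → 𝒳)) (t : ℕ) : ℝ :=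
  ∑ x : Fin t → 𝒳, Real.negMulLog (blockPmf μ 1 t x)

/-- Order-`α` Rényi entropy of the block `(X_1, …, X_t)`. -/
noncomputable def renyiH (μ : Measure (ℤ → 𝒳)) (α : ℝ) (t : ℕ) : ℝ :=
  (1 - α)⁻¹ * Real.log (∑ x : Fin t → 𝒳, blockPmf μ 1 t x ^ α)

/-- `max_{x : P(x) > 0} log (1 / P_{X_1^t}(x))`. -/
noncomputable def maxInfo (μ : Measure (ℤ → 𝒳)) (t : ℕ) : ℝ :=
  sSup {r : ℝ | ∃ x : Fin t → 𝒳, 0 < blockPmf μ 1 t x ∧ r = Real.log (1 / blockPmf μ 1 t x)}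

/-- The σ-algebra generated by the coordinates with index `≤ i`. -/
def pastSigma (𝒳 : Type*) [MeasurableSpace 𝒳] (i : ℤ) : MeasurableSpace (ℤ → 𝒳) :=
  MeasurableSpace.comap (fun ω (j : {j : ℤ // j ≤ i}) => ω (j : ℤ)) inferInstance

/-- The σ-algebra generated by the coordinates with index `≥ i`. -/
def futureSigma (𝒳 : Type*) [MeasurableSpace 𝒳] (i : ℤ) : MeasurableSpace (ℤ → 𝒳) :=
  MeasurableSpace.comap (fun ω (j : {j : ℤ // i ≤ j}) => ω (j : ℤ)) inferInstance

/-- Strong mixing coefficient `d(s)`. -/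
noncomputable def mixCoef (μ : Measure (ℤ → 𝒳)) (s : ℕ) : ℝ :=
  sSup {r : ℝ | ∃ (i : ℤ) (E F : Set (ℤ → 𝒳)),
    MeasurableSet[pastSigma 𝒳 i] E ∧ MeasurableSet[futureSigma 𝒳 (i + (s : ℤ))] F ∧
    μ E ≠ 0 ∧ r = |(μ (F ∩ E)).toReal / (μ E).toReal - (μ F).toReal|}

/-- The read length `ℓ(n) = ⌈β log n⌉`. -/
noncomputable def ell (β : ℝ) (n : ℕ) : ℕ := ⌈β * Real.log n⌉₊

/-- The window from which `I(2)` is drawn uniformly, given `I(1) = i₁`. -/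
noncomputable def window (n L : ℕ) (i₁ : ℤ) : Finset ℤ :=
  if i₁ ≤ (L : ℤ) - 1 then Finset.Icc (i₁ - (L : ℤ) + 1) (i₁ + (n : ℤ) - (L : ℤ))
  else if i₁ ≤ (n : ℤ) - (L : ℤ) + 1 then Finset.Icc 1 (n : ℤ)
  else Finset.Icc (i₁ + (L : ℤ) - (n : ℤ)) (i₁ + (L : ℤ) - 1)

/-- Joint pmf of the pair of starting indices `(I(1), I(2))`. -/
noncomputable def idxWeight (n L : ℕ) (i₁ i₂ : ℤ) : ℝ :=
  if i₁ ∈ Finset.Icc 1 (n : ℤ) ∧ i₂ ∈ window n L i₁ then (((n : ℝ)) ^ 2)⁻¹ else 0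

/-- The (signed) overlap between the two reads. -/
def overlap (L : ℕ) (i₁ i₂ : ℤ) : ℤ :=
  if i₁ ≤ i₂ then max 0 ((L : ℤ) - (i₂ - i₁)) else -(max 0 ((L : ℤ) - (i₁ - i₂)))

/-- Bayesian error probability of the detector `That` in the noiseless setting. -/
noncomputable def errProb (μ : Measure (ℤ → 𝒳)) (n L : ℕ)
    (That : (Fin L → 𝒳) → (Fin L → 𝒳) → ℤ) : ℝ :=
  ∑' p : ℤ × ℤ, idxWeight n L p.1 p.2 *
    (μ {ω | That (fun k => ω (p.1 + ((k : ℕ) : ℤ))) (fun k => ω (p.2 + ((k : ℕ) : ℤ))) ≠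
        overlap L p.1 p.2}).toReal

/-- Minimal Bayesian error probability over all detectors with values in `𝒯`. -/
noncomputable def Pstar (μ : Measure (ℤ → 𝒳)) (β : ℝ) (n : ℕ) : ℝ :=
  sInf {e : ℝ | ∃ That : (Fin (ell β n) → 𝒳) → (Fin (ell β n) → 𝒳) → ℤ,
    (∀ y₁ y₂, That y₁ y₂ ∈ Set.Icc (1 - (ell β n : ℤ)) ((ell β n : ℤ))) ∧
    e = errProb μ n (ell β n) That}

/-- The minimal detectable overlap `t_MDO(n)`. -/
noncomputable def tMDO (μ : Measure (ℤ → 𝒳)) (β : ℝ) (n : ℕ) : ℕ :=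
  sSup {t : ℕ | 1 ≤ t ∧ t ≤ ell β n ∧
    maxInfo μ t ≤ Real.log ((n : ℝ) - (2 * (ell β n : ℝ) - 1))}


open Asymptotics in
private lemma logn_atTop' : Tendsto (fun n : ℕ => Real.log n) atTop atTop :=
  Real.tendsto_log_atTop.comp tendsto_natCast_atTop_atTop

private lemma ell_le' (β : ℝ) (hβ : 0 < β) : ∀ᶠ n : ℕ in atTop,
    β * Real.log n ≤ (ell β n : ℝ) ∧ (ell β n : ℝ) ≤ β * Real.log n + 1 := by
  filter_upwards [eventually_ge_atTop 1] with n hn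
  have h1 : (1:ℝ) ≤ n := by exact_mod_cast hn
  have h0 : 0 ≤ β * Real.log n := mul_nonneg hβ.le (Real.log_nonneg h1)
  simp only [ell]
  exact ⟨Nat.le_ceil _, (Nat.ceil_lt_add_one h0).le⟩

private lemma small_log' (a b : ℝ) (ha : 0 < a) :
    ∀ᶠ n : ℕ in atTop, b * Real.log n + 1 ≤ a * n := by
  have h : (fun x : ℝ => b * Real.log x) =o[atTop] id :=
    Real.isLittleO_log_id_atTop.const_mul_left b
  have h2 := h.def (show (0:ℝ) < a / 2 by linarith)
  have h3 : ∀ᶠ x : ℝ in atTop, b * Real.log x + 1 ≤ a * x := by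
    filter_upwards [h2, eventually_ge_atTop (max 0 (2 / a))] with x hx hx0
    have hx0' : 0 ≤ x := le_trans (le_max_left _ _) hx0
    have hx1 : 2 / a ≤ x := le_trans (le_max_right _ _) hx0
    have : b * Real.log x ≤ a / 2 * x := by
      calc b * Real.log x ≤ ‖b * Real.log x‖ := le_norm_self _
        _ ≤ a / 2 * ‖id x‖ := hx
        _ = a / 2 * x := by rw [id, Real.norm_of_nonneg hx0']
    have h4 : (1:ℝ) ≤ a / 2 * x := by
      rw [div_le_iff₀ ha] at hx1
      nlinarith
    nlinarith
  exact tendsto_natCast_atTop_atTop.eventually h3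

private lemma aux_lower' (f : ℕ → ℝ) (β Hinf : ℝ) (hβ : 0 < β) (hH : 0 < Hinf)
    (hf : Tendsto (fun t : ℕ => f t / t) atTop (nhds Hinf)) (hβH : 1 < β * Hinf)
    (c : ℝ) (hc : 0 < c) (hc2 : c * Hinf < 1) :
    ∀ᶠ n : ℕ in atTop, ∃ t : ℕ,
      (1 ≤ t ∧ t ≤ ell β n ∧ f t ≤ Real.log ((n:ℝ) - (2 * (ell β n : ℝ) - 1)))
      ∧ c * Real.log n ≤ (t:ℝ) := by
  set δ : ℝ := (1 - c * Hinf) / (2 * c) with hδdef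
  have hδ : 0 < δ := div_pos (by linarith) (by linarith)
  have hρ : c * (Hinf + δ) = (1 + c * Hinf) / 2 := by
    rw [hδdef, mul_add, mul_div_assoc', mul_comm 2 c, mul_div_mul_left _ _ hc.ne']; ring
  set ρ : ℝ := (1 + c * Hinf) / 2 with hρdef
  have hρ1 : ρ < 1 := by rw [hρdef]; linarith
  have hρ0 : 0 < ρ := by rw [hρdef]; positivity
  have hub : ∀ᶠ t : ℕ in atTop, f t ≤ (Hinf + δ) * t := by
    filter_upwards [hf.eventually (eventually_lt_nhds (lt_add_of_pos_right Hinf hδ)),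
      eventually_ge_atTop 1] with t ht ht1
    have htpos : (0:ℝ) < t := by exact_mod_cast ht1
    have := (div_lt_iff₀ htpos).mp ht
    linarith
  have hclog : Tendsto (fun n : ℕ => c * Real.log n) atTop atTop :=
    logn_atTop'.const_mul_atTop hc
  have htn : Tendsto (fun n : ℕ => ⌈c * Real.log n⌉₊) atTop atTop := by
    rw [← tendsto_natCast_atTop_iff (R := ℝ)]
    exact tendsto_atTop_mono (fun n => Nat.le_ceil _) hclog
  have hcβ : c ≤ β := by
    have h1 : c * Hinf < β * Hinf := lt_trans hc2 hβH
    exact le_of_lt (lt_of_mul_lt_mul_right h1 hH.le)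
  filter_upwards [htn.eventually_ge_atTop 1, htn.eventually hub,
    eventually_ge_atTop 1, small_log' (1/2) (2*β) (by norm_num),
    ell_le' β hβ, hclog.eventually_ge_atTop 0,
    (logn_atTop'.const_mul_atTop (show (0:ℝ) < 1 - ρ by linarith)).eventually_ge_atTop
      (Hinf + δ + Real.log 2)] with n h1 h2 h3 h4 h5 h6 h7
  refine ⟨⌈c * Real.log n⌉₊, ⟨h1, ?_, ?_⟩, Nat.le_ceil _⟩
  · exact Nat.ceil_le_ceil (mul_le_mul_of_nonneg_right hcβ
      (Real.log_nonneg (by exact_mod_cast h3)))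
  · have hn1 : (1:ℝ) ≤ n := by exact_mod_cast h3
    have hceil : (⌈c * Real.log n⌉₊ : ℝ) ≤ c * Real.log n + 1 := (Nat.ceil_lt_add_one h6).le
    have hstep1 : f ⌈c * Real.log n⌉₊ ≤ ρ * Real.log n + (Hinf + δ) := by
      calc f ⌈c * Real.log n⌉₊ ≤ (Hinf + δ) * ⌈c * Real.log n⌉₊ := h2
        _ ≤ (Hinf + δ) * (c * Real.log n + 1) := by
            apply mul_le_mul_of_nonneg_left hceil (by linarith)
        _ = ρ * Real.log n + (Hinf + δ) := by rw [← hρ]; ring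
    have hell : (ell β n : ℝ) ≤ β * Real.log n + 1 := h5.2
    have hnl : (n:ℝ) / 2 ≤ (n:ℝ) - (2 * (ell β n : ℝ) - 1) := by
      have : 2 * β * Real.log n + 1 ≤ 1/2 * n := h4
      nlinarith
    have hlog2 : Real.log n - Real.log 2 ≤ Real.log ((n:ℝ) - (2 * (ell β n : ℝ) - 1)) := by
      have h02 : (0:ℝ) < (n:ℝ) / 2 := by linarith
      calc Real.log n - Real.log 2
          = Real.log ((n:ℝ) / 2) := (Real.log_div (by linarith) (by norm_num)).symm
        _ ≤ _ := Real.log_le_log h02 hnl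
    have : ρ * Real.log n + (Hinf + δ) ≤ Real.log n - Real.log 2 := by
      have := h7
      nlinarith [Real.log_nonneg hn1]
    linarith

private lemma aux_upper' (f : ℕ → ℝ) (β Hinf : ℝ) (hβ : 0 < β) (hH : 0 < Hinf)
    (hf : Tendsto (fun t : ℕ => f t / t) atTop (nhds Hinf))
    (C : ℝ) (hC : 1 / Hinf < C) :
    ∀ᶠ n : ℕ in atTop, ∀ t : ℕ, 1 ≤ t →
      f t ≤ Real.log ((n:ℝ) - (2 * (ell β n : ℝ) - 1)) → (t:ℝ) ≤ C * Real.log n := by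
  have hC0 : 0 < C := lt_trans (by positivity) hC
  set δ : ℝ := (Hinf - 1 / C) / 2 with hδdef
  have hinvC : 0 < 1 / C := by positivity
  have h1C : 1 / C < Hinf := (div_lt_iff₀ hC0).mpr (by nlinarith [(div_lt_iff₀ hH).mp hC])
  have hδ : 0 < δ := by rw [hδdef]; linarith
  have hHδ : Hinf - δ = (Hinf + 1 / C) / 2 := by rw [hδdef]; ring
  have hHδ0 : 0 < Hinf - δ := by rw [hHδ]; positivity
  have hCHδ : 1 < C * (Hinf - δ) := by
    rw [hHδ]
    have : C * (1 / C) = 1 := mul_one_div_cancel (ne_of_gt hC0)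
    nlinarith
  have hlb : ∀ᶠ t : ℕ in atTop, (Hinf - δ) * t ≤ f t := by
    filter_upwards [hf.eventually (eventually_gt_nhds (show Hinf - δ < Hinf by linarith)),
      eventually_ge_atTop 1] with t ht ht1
    have htpos : (0:ℝ) < t := by exact_mod_cast ht1
    have := (lt_div_iff₀ htpos).mp ht
    linarith
  obtain ⟨T₀, hT₀⟩ := eventually_atTop.mp hlb
  filter_upwards [small_log' (1/2) (2*β) (by norm_num), eventually_ge_atTop 8,
    ell_le' β hβ, (logn_atTop'.const_mul_atTop hC0).eventually_ge_atTop (T₀ : ℝ),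
    (logn_atTop'.const_mul_atTop
      (show (0:ℝ) < C * (Hinf - δ) - 1 by linarith)).eventually_ge_atTop 1]
    with n h1 h2 h3 h4 h5
  intro t ht hft
  have hn8 : (8:ℝ) ≤ n := by exact_mod_cast h2
  have hell : (ell β n : ℝ) ≤ β * Real.log n + 1 := h3.2
  have hnl2 : (n:ℝ) / 2 ≤ (n:ℝ) - (2 * (ell β n : ℝ) - 1) := by
    have : 2 * β * Real.log n + 1 ≤ 1/2 * n := h1
    nlinarith
  have hnlpos : (0:ℝ) < (n:ℝ) - (2 * (ell β n : ℝ) - 1) := by linarith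
  have hellnn : (0:ℝ) ≤ (ell β n : ℝ) := Nat.cast_nonneg _
  have hnlub : (n:ℝ) - (2 * (ell β n : ℝ) - 1) ≤ (n:ℝ) + 1 := by linarith
  have hlogub : Real.log ((n:ℝ) - (2 * (ell β n : ℝ) - 1)) ≤ Real.log ((n:ℝ) + 1) :=
    Real.log_le_log hnlpos hnlub
  have hlog1 : Real.log ((n:ℝ) + 1) ≤ Real.log n + 1 := by
    have h2n : (n:ℝ) + 1 ≤ 2 * n := by linarith
    calc Real.log ((n:ℝ) + 1) ≤ Real.log (2 * n) := Real.log_le_log (by linarith) h2n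
      _ = Real.log 2 + Real.log n := Real.log_mul (by norm_num) (by linarith)
      _ ≤ Real.log n + 1 := by
          have := Real.log_le_sub_one_of_pos (show (0:ℝ) < 2 by norm_num)
          linarith
  have hkey : Real.log ((n:ℝ) + 1) ≤ C * (Hinf - δ) * Real.log n := by nlinarith
  rcases le_or_gt t T₀ with hle | hgt
  · calc (t:ℝ) ≤ (T₀:ℝ) := by exact_mod_cast hle
      _ ≤ C * Real.log n := h4
  · have hTt := hT₀ t hgt.le
    have hchain : (Hinf - δ) * t ≤ C * (Hinf - δ) * Real.log n := by
      calc (Hinf - δ) * t ≤ f t := hTt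
        _ ≤ Real.log ((n:ℝ) - (2 * (ell β n : ℝ) - 1)) := hft
        _ ≤ Real.log ((n:ℝ) + 1) := hlogub
        _ ≤ C * (Hinf - δ) * Real.log n := hkey
    exact (mul_le_mul_iff_of_pos_left hHδ0).mp
      (by linarith : (Hinf - δ) * t ≤ (Hinf - δ) * (C * Real.log n))

/-- Asymptotics of the minimal detectable overlap. -/
theorem tMDO_asymptotics
    (μ : Measure (ℤ → 𝒳)) [IsProbabilityMeasure μ]
    (herg : Ergodic (shift (𝒳 := 𝒳)) μ)
    (β : ℝ) (hβ : 0 < β)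
    (Hinf : ℝ) (hHinfpos : 0 < Hinf)
    (hHinf : Tendsto (fun t : ℕ => maxInfo μ t / t) atTop (nhds Hinf))
    (hβH : 1 < β * Hinf) :
    (∀ᶠ n : ℕ in atTop,
        {t : ℕ | 1 ≤ t ∧ t ≤ ell β n ∧
          maxInfo μ t ≤ Real.log ((n : ℝ) - (2 * (ell β n : ℝ) - 1))}.Nonempty) ∧
      Tendsto (fun n : ℕ => (tMDO μ β n : ℝ)) atTop atTop ∧
      Tendsto (fun n : ℕ => (tMDO μ β n : ℝ) / Real.log n) atTop (nhds (1 / Hinf)) := by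
  have hinv : (0:ℝ) < 1 / Hinf := by positivity
  have hbdd : ∀ n : ℕ, BddAbove {t : ℕ | 1 ≤ t ∧ t ≤ ell β n ∧
      maxInfo μ t ≤ Real.log ((n : ℝ) - (2 * (ell β n : ℝ) - 1))} :=
    fun n => ⟨ell β n, fun x hx => hx.2.1⟩
  have hlower : ∀ c : ℝ, 0 < c → c * Hinf < 1 →
      ∀ᶠ n : ℕ in atTop, ({t : ℕ | 1 ≤ t ∧ t ≤ ell β n ∧
          maxInfo μ t ≤ Real.log ((n : ℝ) - (2 * (ell β n : ℝ) - 1))}.Nonempty ∧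
        c * Real.log n ≤ (tMDO μ β n : ℝ)) := by
    intro c h1 h2
    filter_upwards [aux_lower' (fun t => maxInfo μ t) β Hinf hβ hHinfpos hHinf hβH c h1 h2]
      with n hn
    obtain ⟨t, ht, hct⟩ := hn
    refine ⟨⟨t, ht⟩, ?_⟩
    have hle : t ≤ tMDO μ β n := le_csSup (hbdd n) ht
    calc c * Real.log n ≤ (t:ℝ) := hct
      _ ≤ _ := by exact_mod_cast hle
  have hc0 : (0:ℝ) < 1 / (2 * Hinf) := by positivity
  have hc2 : (1 / (2 * Hinf)) * Hinf < 1 := by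
    rw [div_mul_eq_mul_div, one_mul, div_lt_one (by positivity)]
    linarith
  have hmain := hlower _ hc0 hc2
  refine ⟨hmain.mono fun n hn => hn.1, ?_, ?_⟩
  · exact tendsto_atTop_mono' atTop (hmain.mono fun n hn => hn.2)
      (logn_atTop'.const_mul_atTop hc0)
  · rw [tendsto_order]
    constructor
    · intro c' hc'
      set c : ℝ := (max c' 0 + 1 / Hinf) / 2 with hcdef
      have hmaxlt : max c' 0 < 1 / Hinf := max_lt hc' hinv
      have hcpos : 0 < c := by
        have : (0:ℝ) ≤ max c' 0 := le_max_right _ _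
        rw [hcdef]; linarith
      have hclt : c < 1 / Hinf := by rw [hcdef]; linarith
      have hcH : c * Hinf < 1 := by
        have := (lt_div_iff₀ hHinfpos).mp hclt
        linarith
      have hc'c : c' < c := by
        have : c' ≤ max c' 0 := le_max_left _ _
        rw [hcdef]; linarith
      filter_upwards [hlower c hcpos hcH, logn_atTop'.eventually_ge_atTop 1] with n hn hlg
      have hlp : (0:ℝ) < Real.log n := by linarith
      have : c ≤ (tMDO μ β n : ℝ) / Real.log n := (le_div_iff₀ hlp).mpr (by linarith [hn.2])
      linarith
    · intro C' hC'
      set C : ℝ := (1 / Hinf + C') / 2 with hCdef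
      have hCgt : 1 / Hinf < C := by rw [hCdef]; linarith
      have hCC' : C < C' := by rw [hCdef]; linarith
      filter_upwards [aux_upper' (fun t => maxInfo μ t) β Hinf hβ hHinfpos hHinf C hCgt,
        hmain, logn_atTop'.eventually_ge_atTop 1] with n hU hn hlg
      have hmem : tMDO μ β n ∈ {t : ℕ | 1 ≤ t ∧ t ≤ ell β n ∧
          maxInfo μ t ≤ Real.log ((n : ℝ) - (2 * (ell β n : ℝ) - 1))} := by
        rw [tMDO]; exact Nat.sSup_mem hn.1 (hbdd n)
      have hb := hU (tMDO μ β n) hmem.1 hmem.2.2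
      have hlp : (0:ℝ) < Real.log n := by linarith
      have : (tMDO μ β n : ℝ) / Real.log n ≤ C := (div_le_iff₀ hlp).mpr hb
      linarith


end
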